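/- For every partition λ of n there exists a unique partition λ⁺ of n in which every even part occurs with even multiplicity, such that λ⁺ ≤ λ in the dominance order, and for any partition η of n with every even part occurring with even multiplicity, η ≤ λ implies η ≤ λ⁺. -/

import Mathlib

/-- A partition of `n`: weakly decreasing list of positive integers summing to `n`. -/
def IsPartition (l : List ℕ) (n : ℕ) : Prop :=
  l.Pairwise (· ≥ ·) ∧ (∀ x ∈ l, 0 < x) ∧ l.sum = n

/-- Dominance order: `Dominates l m` means `l ≥ m`, i.e. every partial sum of `l`
dominates the corresponding one of `m` (padding with zeros). -/
def Dominates (l m : List ℕ) : Prop := ∀ k, (m.take k).sum ≤ (l.take k).sum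

namespace PartAux
open List

lemma sum_take_succ (l : List ℕ) (j : ℕ) :
    (l.take (j+1)).sum = (l.take j).sum + l.getD j 0 := by
  rcases lt_or_ge j l.length with h | h
  · rw [List.getD_eq_getElem _ _ h]
    exact List.sum_take_succ l j h
  · rw [List.take_of_length_le h, List.take_of_length_le (by omega),
      List.getD_eq_default _ _ h]
    simp

lemma getD_mono {l : List ℕ} (hs : l.Pairwise (· ≥ ·)) {i j : ℕ} (hij : i ≤ j) :
    l.getD j 0 ≤ l.getD i 0 := by
  rcases lt_or_ge j l.length with h | h
  · have hi : i < l.length := by omega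
    rw [List.getD_eq_getElem _ _ h, List.getD_eq_getElem _ _ hi]
    rcases eq_or_lt_of_le hij with rfl | hlt
    · exact le_refl _
    · exact (List.pairwise_iff_getElem.1 hs) i j hi h hlt
  · rw [List.getD_eq_default _ _ h]; exact Nat.zero_le _

lemma mem_take_imp {l : List ℕ} {j : ℕ} {x : ℕ} (hx : x ∈ l.take j) :
    ∃ i, i < j ∧ i < l.length ∧ l.getD i 0 = x := by
  obtain ⟨i, hi, hx⟩ := List.mem_iff_getElem.1 hx
  have hlen : i < j ∧ i < l.length := by
    have := hi; rw [List.length_take] at this; omega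
  exact ⟨i, hlen.1, hlen.2, by rw [List.getD_eq_getElem _ _ hlen.2, ← hx, List.getElem_take]⟩

lemma mem_drop_imp {l : List ℕ} {j : ℕ} {x : ℕ} (hx : x ∈ l.drop j) :
    ∃ i, j ≤ i ∧ l.getD i 0 = x := by
  obtain ⟨i, hi, hx⟩ := List.mem_iff_getElem.1 hx
  have hlen : j + i < l.length := by
    have := hi; rw [List.length_drop] at this; omega
  refine ⟨j + i, by omega, ?_⟩
  rw [List.getD_eq_getElem _ _ hlen, ← hx, List.getElem_drop]

lemma sum_mod_two (l : List ℕ) : l.sum % 2 = l.countP (fun x => decide (x % 2 = 1)) % 2 := by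
  induction l with
  | nil => rfl
  | cons a t ih =>
    rw [List.sum_cons, List.countP_cons]
    by_cases h : a % 2 = 1 <;> simp [h] <;> omega

lemma countP_split (l : List ℕ) (p q : ℕ → Bool) :
    l.countP p = l.countP (fun x => p x && q x) + l.countP (fun x => p x && !q x) := by
  induction l with
  | nil => rfl
  | cons a t ih =>
    rw [List.countP_cons, List.countP_cons, List.countP_cons]
    by_cases h1 : p a <;> by_cases h2 : q a <;> simp [h1, h2] <;> omega

lemma even_countP {l : List ℕ} {p : ℕ → Bool} (h : ∀ x, p x → Even (l.count x)) :
    Even (l.countP p) := by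
  have h1 : l.countP p = (l.filter p).length := List.countP_eq_length_filter
  have h2 : ((l.filter p : List ℕ) : Multiset ℕ).card =
      ∑ x ∈ (l.filter p).toFinset, (l.filter p).count x := by
    rw [← Multiset.toFinset_sum_count_eq]
    congr 1
    funext a
    exact Multiset.coe_count a _
  rw [h1, ← Multiset.coe_card, h2]
  refine Finset.sum_induction _ Even (fun a b ha hb => ha.add hb) Even.zero ?_
  intro x hx
  have hp : p x := by
    have := List.mem_toFinset.1 hx
    exact List.of_mem_filter this
  rw [List.count_filter hp]
  exact h x hp

end PartAux

namespace PartAux2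
open PartAux List

lemma take_takeWhile_eq (l : List ℕ) (p : ℕ → Bool) :
    l.take (l.takeWhile p).length = l.takeWhile p :=
  ((List.prefix_iff_eq_take).1 (List.takeWhile_prefix p)).symm

lemma drop_takeWhile_eq (l : List ℕ) (p : ℕ → Bool) :
    l.drop (l.takeWhile p).length = l.dropWhile p := by
  have h := List.take_append_drop (l.takeWhile p).length l
  rw [take_takeWhile_eq] at h
  have h2 : l.takeWhile p ++ l.dropWhile p = l := List.takeWhile_append_dropWhile
  have := h.trans h2.symm
  exact List.append_cancel_left this

lemma sorted_cut {l : List ℕ} (hs : l.Pairwise (· ≥ ·)) (v : ℕ) (hv : 0 < v) :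
    (∀ i, i < (l.takeWhile (fun x => decide (v ≤ x))).length → v ≤ l.getD i 0) ∧
    (∀ i, (l.takeWhile (fun x => decide (v ≤ x))).length ≤ i → l.getD i 0 < v) ∧
    (l.takeWhile (fun x => decide (v ≤ x))).length ≤ l.length := by
  set p : ℕ → Bool := fun x => decide (v ≤ x) with hp
  set K := (l.takeWhile p).length with hK
  have hKlen : K ≤ l.length := by
    rw [hK]; exact (List.takeWhile_prefix p).length_le
  refine ⟨?_, ?_, hKlen⟩
  · intro i hi
    have hil : i < l.length := lt_of_lt_of_le hi hKlen
    have hmem : l.getD i 0 ∈ l.takeWhile p := by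
      rw [← take_takeWhile_eq l p]
      rw [List.getD_eq_getElem _ _ hil]
      have hi' : i < (l.take K).length := by rw [List.length_take]; omega
      have : (l.take K)[i] = l[i] := List.getElem_take
      rw [← this]
      exact List.getElem_mem hi'
    have := List.mem_takeWhile_imp hmem
    rw [hp] at this
    exact of_decide_eq_true this
  · intro i hi
    rcases lt_or_ge i l.length with hil | hil
    · have hKl : K < l.length := lt_of_le_of_lt hi hil
      have hne : l.dropWhile p ≠ [] := by
        rw [← drop_takeWhile_eq]
        intro hcon
        have := List.drop_eq_nil_iff.1 hcon
        omega
      have hhead := List.head_dropWhile_not p hne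
      have hheadval : (l.dropWhile p).head hne = l.getD K 0 := by
        have e1 : (l.dropWhile p).head? = some ((l.dropWhile p).head hne) :=
          List.head?_eq_head hne
        have e2 : (l.dropWhile p).head? = l[K]? := by
          rw [← drop_takeWhile_eq l p, List.head?_drop]
        rw [e1, List.getElem?_eq_getElem hKl] at e2
        rw [List.getD_eq_getElem _ _ hKl]
        exact Option.some_injective _ e2
      rw [hheadval] at hhead
      have h1 : ¬ (v ≤ l.getD K 0) := by
        rw [hp] at hhead; simpa using hhead
      have h2 : l.getD i 0 ≤ l.getD K 0 := getD_mono hs hi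
      omega
    · rw [List.getD_eq_default _ _ hil]; omega

end PartAux2

namespace PartAux3
open PartAux List

def Dominates' (l m : List ℕ) : Prop := ∀ k, (m.take k).sum ≤ (l.take k).sum

lemma getD_pos_length {l : List ℕ} (hl : ∀ x ∈ l, 0 < x) {j : ℕ} (h : j < l.length) :
    0 < l.getD j 0 := by
  rw [List.getD_eq_getElem _ _ h]
  exact hl _ (List.getElem_mem h)

lemma eq_of_dom_dom {l m : List ℕ} (hl : ∀ x ∈ l, 0 < x) (hm : ∀ x ∈ m, 0 < x)
    (h1 : Dominates' l m) (h2 : Dominates' m l) : l = m := by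
  have hS : ∀ k, (l.take k).sum = (m.take k).sum := fun k => le_antisymm (h2 k) (h1 k)
  have hgetD : ∀ j, l.getD j 0 = m.getD j 0 := by
    intro j
    have e1 := PartAux.sum_take_succ l j
    have e2 := PartAux.sum_take_succ m j
    have e3 := hS j
    have e4 := hS (j+1)
    omega
  have hlen : l.length = m.length := by
    rcases lt_trichotomy l.length m.length with h | h | h
    · exfalso
      have := getD_pos_length hm h
      rw [← hgetD, List.getD_eq_default _ _ (le_refl _)] at this
      omega
    · exact h
    · exfalso
      have := getD_pos_length hl h
      rw [hgetD, List.getD_eq_default _ _ (le_refl _)] at this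
      omega
  apply List.ext_getElem hlen
  intro i h1' h2'
  have := hgetD i
  rwa [List.getD_eq_getElem _ _ h1', List.getD_eq_getElem _ _ h2'] at this

end PartAux3

namespace PartStep
open PartAux PartAux2 PartAux3 List

lemma getD_drop (l : List ℕ) (K i : ℕ) :
    (l.drop K).getD i 0 = l.getD (K + i) 0 := by
  rcases lt_or_ge (K + i) l.length with h | h
  · have h2 : i < (l.drop K).length := by rw [List.length_drop]; omega
    rw [List.getD_eq_getElem _ _ h2, List.getD_eq_getElem _ _ h]
    exact List.getElem_drop
  · have h2 : (l.drop K).length ≤ i := by rw [List.length_drop]; omega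
    rw [List.getD_eq_default _ _ h2, List.getD_eq_default _ _ h]

lemma sum_drop_eq (l : List ℕ) (m : ℕ) :
    (l.drop m).sum = l.getD m 0 + (l.drop (m+1)).sum := by
  rcases lt_or_ge m l.length with h | h
  · rw [List.drop_eq_getElem_cons h, List.sum_cons, List.getD_eq_getElem _ _ h]
  · rw [List.drop_eq_nil_of_le h, List.drop_eq_nil_of_le (by omega),
      List.getD_eq_default _ _ h]
    simp

lemma length_le_sum (l : List ℕ) (h : ∀ x ∈ l, 0 < x) : l.length ≤ l.sum := by
  induction l with
  | nil => simp
  | cons a t ih =>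
    simp only [List.length_cons, List.sum_cons]
    have h1 : 0 < a := h a (by simp)
    have h2 := ih (fun x hx => h x (by simp [hx]))
    omega

end PartStep

namespace PartStep
open PartAux PartAux2 PartAux3 List

lemma countP_even_take {η : List ℕ} (hs : η.Pairwise (· ≥ ·)) {j v : ℕ}
    (hge : v ≤ η.getD (j-1) 0) (hj : 0 < j) (hlt : η.getD j 0 < v) :
    (η.take j).countP (fun x => decide (x % 2 = 0)) =
      η.countP (fun x => decide (v ≤ x) && decide (x % 2 = 0)) := by
  conv_rhs => rw [← List.take_append_drop j η]
  rw [List.countP_append]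
  have h1 : (η.take j).countP (fun x => decide (v ≤ x) && decide (x % 2 = 0)) =
      (η.take j).countP (fun x => decide (x % 2 = 0)) := by
    apply List.countP_congr
    intro x hx
    obtain ⟨i, hij, hilen, hieq⟩ := mem_take_imp hx
    have : η.getD (j-1) 0 ≤ η.getD i 0 := getD_mono hs (by omega)
    have hvx : v ≤ x := by omega
    simp [hvx]
  have h2 : (η.drop j).countP (fun x => decide (v ≤ x) && decide (x % 2 = 0)) = 0 := by
    rw [List.countP_eq_zero]
    intro x hx
    obtain ⟨i, hij, hieq⟩ := mem_drop_imp hx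
    have : η.getD i 0 ≤ η.getD j 0 := getD_mono hs hij
    have : ¬ (v ≤ x) := by omega
    simp [this]
  omega

lemma countP_vE_odd {l : List ℕ} {v : ℕ} (hveven : Even v)
    (hvcount : ¬ Even (l.count v))
    (hcounts : ∀ w, Even w → v < w → Even (l.count w)) :
    ¬ Even (l.countP (fun x => decide (v ≤ x) && decide (x % 2 = 0))) := by
  rw [countP_split l _ (fun x => decide (x = v))]
  have h1 : l.countP (fun x => (decide (v ≤ x) && decide (x % 2 = 0)) && decide (x = v)) =
      l.count v := by
    rw [List.count_eq_countP]
    apply List.countP_congr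
    intro x _
    by_cases h : x = v
    · subst h
      simp [Nat.even_iff.1 hveven]
    · simp [h, fun hh => h (by exact hh)]
  have h2 : Even (l.countP (fun x => (decide (v ≤ x) && decide (x % 2 = 0)) && !decide (x = v))) := by
    apply even_countP
    intro x hx
    simp only [Bool.and_eq_true, decide_eq_true_eq, Bool.not_eq_true', decide_eq_false_iff_not] at hx
    exact hcounts x (Nat.even_iff.2 hx.1.2) (by omega)
  rw [Nat.even_add]
  rw [h1]
  intro hcon
  rcases Nat.even_or_odd (l.count v) with h | h
  · exact hvcount h
  · have := hcon.2 h2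
    exact hvcount this

end PartStep

namespace PartStep
open PartAux PartAux2 PartAux3 List

lemma step (l : List ℕ) (hs : l.Pairwise (· ≥ ·)) (hpos : ∀ x ∈ l, 0 < x)
    (hbad : ∃ x, Even x ∧ ¬ Even (l.count x)) :
    ∃ l' : List ℕ, l'.Pairwise (· ≥ ·) ∧ (∀ x ∈ l', 0 < x) ∧ l'.sum = l.sum ∧
      (∀ j, (l'.take j).sum ≤ (l.take j).sum) ∧
      (∃ j, j ≤ l.length ∧ (l'.take j).sum < (l.take j).sum) ∧
      (∀ η : List ℕ, η.Pairwise (· ≥ ·) →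
        (∀ x : ℕ, Even x → Even (η.count x)) →
        (∀ j, (η.take j).sum ≤ (l.take j).sum) →
        (∀ j, (η.take j).sum ≤ (l'.take j).sum)) := by
  classical
  -- choose v : the largest even value with odd multiplicity
  obtain ⟨x0, hx0e, hx0c⟩ := hbad
  have hx0mem : x0 ∈ l := by
    rw [← List.count_pos_iff]
    rcases Nat.eq_zero_or_pos (l.count x0) with h | h
    · exact absurd (h ▸ Even.zero) hx0c
    · exact h
  set B : Finset ℕ := l.toFinset.filter (fun x => Even x ∧ ¬ Even (l.count x)) with hB
  have hBne : B.Nonempty := ⟨x0, by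
    rw [hB, Finset.mem_filter, List.mem_toFinset]; exact ⟨hx0mem, hx0e, hx0c⟩⟩
  set v := B.max' hBne with hvdef
  have hvB : v ∈ B := B.max'_mem hBne
  rw [hB, Finset.mem_filter, List.mem_toFinset] at hvB
  obtain ⟨hvmem, hveven, hvcount⟩ := hvB
  have hv2 : 2 ≤ v := by
    have h1 := hpos v hvmem
    have h2 := Nat.even_iff.1 hveven
    omega
  have hcounts : ∀ w, Even w → v < w → Even (l.count w) := by
    intro w hw hvw
    by_contra hc
    have hwmem : w ∈ l := by
      rw [← List.count_pos_iff]
      rcases Nat.eq_zero_or_pos (l.count w) with h | h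
      · exact absurd (h ▸ Even.zero) hc
      · exact h
    have hwB : w ∈ B := by
      rw [hB, Finset.mem_filter, List.mem_toFinset]; exact ⟨hwmem, hw, hc⟩
    have := B.le_max' w hwB
    omega
  -- cut positions
  set K := (l.takeWhile (fun x => decide (v ≤ x))).length with hKdef
  set R := (l.takeWhile (fun x => decide (v - 1 ≤ x))).length with hRdef
  obtain ⟨hKlo, hKhi, hKlen⟩ := sorted_cut hs v (by omega)
  obtain ⟨hRlo, hRhi, hRlen⟩ := sorted_cut hs (v-1) (by omega)
  rw [← hKdef] at hKlo hKhi hKlen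
  rw [← hRdef] at hRlo hRhi hRlen
  have hKR : K ≤ R := by
    by_contra hcon
    have h1 := hKlo R (by omega)
    have h2 := hRhi R (le_refl R)
    omega
  -- the index of v
  obtain ⟨iv, hivlen, hiveq⟩ : ∃ i, i < l.length ∧ l.getD i 0 = v := by
    obtain ⟨i, hi, he⟩ := List.mem_iff_getElem.1 hvmem
    exact ⟨i, hi, by rw [List.getD_eq_getElem _ _ hi, he]⟩
  have hivK : iv < K := by
    by_contra hcon
    have := hKhi iv (by omega)
    omega
  have hK1 : 1 ≤ K := by omega
  have hgetK : l.getD (K-1) 0 = v := by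
    have h1 := hKlo (K-1) (by omega)
    have h2 : l.getD (K-1) 0 ≤ l.getD iv 0 := getD_mono hs (by omega)
    omega
  have hmid : ∀ i, K ≤ i → i < R → l.getD i 0 = v - 1 := by
    intro i h1 h2
    have := hRlo i h2
    have := hKhi i h1
    omega
  set c := l.getD R 0 with hcdef
  have hc : c + 2 ≤ v := by
    have := hRhi R (le_refl R)
    omega
  -- the construction
  set A := l.take (K-1) with hAdef
  set Bm := (l.drop K).take (R-K) with hBmdef
  set C := l.drop (R+1) with hCdef
  set l' := A ++ (v-1) :: (Bm ++ (c+1) :: C) with hl'def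
  have hlenA : A.length = K - 1 := by
    rw [hAdef, List.length_take]; omega
  have hlenBm : Bm.length = R - K := by
    rw [hBmdef, List.length_take, List.length_drop]; omega
  -- element facts
  have hAx : ∀ x ∈ A, v ≤ x := by
    intro x hx
    obtain ⟨i, hij, hilen, hieq⟩ := mem_take_imp hx
    have := hKlo i (by omega)
    omega
  have hBmx : ∀ x ∈ Bm, x = v - 1 := by
    intro x hx
    obtain ⟨i, hij, hilen, hieq⟩ := mem_take_imp hx
    rw [getD_drop] at hieq
    have := hmid (K+i) (by omega) (by omega)
    omega
  have hCx : ∀ x ∈ C, x ≤ c := by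
    intro x hx
    obtain ⟨i, hij, hieq⟩ := mem_drop_imp hx
    have : l.getD i 0 ≤ l.getD R 0 := getD_mono hs (by omega)
    omega
  have hCpos : ∀ x ∈ C, 0 < x := fun x hx => hpos x (List.mem_of_mem_drop hx)
  -- prefix sums of l'
  have hPSa : ∀ j, j ≤ K - 1 → l'.take j = l.take j := by
    intro j hj
    rw [hl'def, List.take_append]
    rw [hlenA, Nat.sub_eq_zero_of_le hj, List.take_zero, List.append_nil]
    rw [hAdef, List.take_take, min_eq_left hj]
  have hPSb : ∀ j, K ≤ j → j ≤ R → (l'.take j).sum + 1 = (l.take j).sum := by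
    intro j h1 h2
    have e1 : l'.take j = A ++ (v-1) :: ((l.drop K).take (j - K)) := by
      rw [hl'def, List.take_append,
        List.take_of_length_le (show A.length ≤ j by rw [hlenA]; omega), hlenA]
      congr 1
      rw [show j - (K-1) = (j - K) + 1 by omega, List.take_succ_cons]
      congr 1
      rw [List.take_append,
        show j - K - Bm.length = 0 by rw [hlenBm]; omega,
        List.take_zero, List.append_nil]
      rw [hBmdef, List.take_take, show min (j-K) (R-K) = j - K by omega]
    have e2 : l.take j = l.take K ++ (l.drop K).take (j - K) := by
      conv_lhs => rw [show j = K + (j - K) by omega]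
      exact List.take_add
    have e3 : (l.take K).sum = A.sum + v := by
      have := PartAux.sum_take_succ l (K-1)
      rw [show K - 1 + 1 = K by omega] at this
      rw [this, hgetK, hAdef]
    rw [e1, e2, List.sum_append, List.sum_append, List.sum_cons, e3]
    omega
  have hsum' : l'.sum = l.sum := by
    have e3 : (l.take K).sum = A.sum + v := by
      have := PartAux.sum_take_succ l (K-1)
      rw [show K - 1 + 1 = K by omega] at this
      rw [this, hgetK, hAdef]
    have e4 : l.sum = (l.take K).sum + (l.drop K).sum :=
      (List.sum_take_add_sum_drop l K).symm
    have e5 : (l.drop K).sum = Bm.sum + (l.drop R).sum := by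
      conv_lhs => rw [← List.take_append_drop (R-K) (l.drop K)]
      rw [List.sum_append, List.drop_drop, show K + (R - K) = R by omega, hBmdef]
    have e6 : (l.drop R).sum = c + C.sum := by
      rw [hcdef, hCdef]; exact sum_drop_eq l R
    have e7 : l'.sum = A.sum + ((v-1) + (Bm.sum + ((c+1) + C.sum))) := by
      rw [hl'def]; simp [List.sum_append, List.sum_cons]
    omega
  have hPSc : ∀ j, R + 1 ≤ j → (l'.take j).sum = (l.take j).sum := by
    intro j hj
    have hre : l' = (A ++ (v-1) :: (Bm ++ [c+1])) ++ C := by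
      rw [hl'def]; simp
    have hlenP : (A ++ (v-1) :: (Bm ++ [c+1])).length = R + 1 := by
      simp [hlenA, hlenBm]; omega
    have hdropj : l'.drop j = l.drop j := by
      rw [hre, List.drop_append,
        List.drop_eq_nil_of_le (show (A ++ (v-1) :: (Bm ++ [c+1])).length ≤ j by
          rw [hlenP]; omega),
        hlenP, List.nil_append, hCdef, List.drop_drop]
      congr 1
      omega
    have e1 := List.sum_take_add_sum_drop l' j
    have e2 := List.sum_take_add_sum_drop l j
    rw [hdropj, hsum'] at e1
    omega
  have hdom : ∀ j, (l'.take j).sum ≤ (l.take j).sum := by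
    intro j
    rcases lt_or_ge j K with h | h
    · rw [hPSa j (by omega)]
    · rcases le_or_gt j R with h2 | h2
      · have := hPSb j h h2; omega
      · rw [hPSc j (by omega)]
  -- sortedness of l'
  have hsorted' : l'.Pairwise (· ≥ ·) := by
    have hsA : A.Pairwise (· ≥ ·) := List.Pairwise.sublist (List.take_sublist _ _) hs
    have hsBm : Bm.Pairwise (· ≥ ·) :=
      List.Pairwise.sublist ((List.take_sublist _ _).trans (List.drop_sublist _ _)) hs
    have hsC : C.Pairwise (· ≥ ·) := List.Pairwise.sublist (List.drop_sublist _ _) hs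
    rw [hl'def]
    rw [List.pairwise_append]
    refine ⟨hsA, ?_, ?_⟩
    · rw [List.pairwise_cons]
      constructor
      · intro b hb
        rcases List.mem_append.1 hb with hb | hb
        · have := hBmx b hb; omega
        · rcases List.mem_cons.1 hb with hb | hb
          · omega
          · have := hCx b hb; omega
      · rw [List.pairwise_append]
        refine ⟨hsBm, ?_, ?_⟩
        · rw [List.pairwise_cons]
          refine ⟨fun b hb => by have := hCx b hb; omega, hsC⟩
        · intro a ha b hb
          have ha' := hBmx a ha
          rcases List.mem_cons.1 hb with hb | hb
          · omega
          · have := hCx b hb; omega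
    · intro a ha b hb
      have ha' := hAx a ha
      rcases List.mem_cons.1 hb with hb | hb
      · omega
      · rcases List.mem_append.1 hb with hb | hb
        · have := hBmx b hb; omega
        · rcases List.mem_cons.1 hb with hb | hb
          · omega
          · have := hCx b hb; omega
  -- positivity of l'
  have hpos' : ∀ x ∈ l', 0 < x := by
    intro x hx
    rw [hl'def] at hx
    rcases List.mem_append.1 hx with hx | hx
    · have := hAx x hx; omega
    · rcases List.mem_cons.1 hx with hx | hx
      · omega
      · rcases List.mem_append.1 hx with hx | hx
        · have := hBmx x hx; omega
        · rcases List.mem_cons.1 hx with hx | hx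
          · omega
          · exact hCpos x hx
  refine ⟨l', hsorted', hpos', hsum', hdom, ⟨K, by omega, ?_⟩, ?_⟩
  · have := hPSb K (le_refl K) hKR; omega
  -- maximality
  intro η hηs hηP1 hηdom j
  rcases lt_or_ge j K with h | h
  · rw [hPSa j (by omega)]; exact hηdom j
  rcases le_or_gt j R with h2 | h2
  swap
  · rw [hPSc j (by omega)]; exact hηdom j
  -- the interesting window : show (η.take j).sum < (l.take j).sum
  have key : ∀ j', K ≤ j' → j' ≤ R → (η.take j').sum ≠ (l.take j').sum := by
    intro j0 hj0K hj0R hcon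
    -- minimal such j
    have hex : ∃ m, K ≤ m ∧ m ≤ R ∧ (η.take m).sum = (l.take m).sum := ⟨j0, hj0K, hj0R, hcon⟩
    obtain ⟨j, hjmin, hjK, hjR, hjeq⟩ :
        ∃ j, (∀ m, m < j → ¬ (K ≤ m ∧ m ≤ R ∧ (η.take m).sum = (l.take m).sum)) ∧
          K ≤ j ∧ j ≤ R ∧ (η.take j).sum = (l.take j).sum := by
      obtain ⟨h1, h2, h3⟩ := Nat.find_spec hex
      exact ⟨Nat.find hex, fun m hm => Nat.find_min hex hm, h1, h2, h3⟩
    -- η.getD (j-1) ≥ v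
    have hην : v ≤ η.getD (j-1) 0 := by
      have eη := PartAux.sum_take_succ η (j-1)
      have el := PartAux.sum_take_succ l (j-1)
      rw [show j - 1 + 1 = j by omega] at eη el
      rcases eq_or_lt_of_le hjK with heq | hlt
      · -- j = K : l.getD (j-1) = v
        have h1 := hηdom (j-1)
        rw [heq] at hgetK
        omega
      · -- j > K : strict at j-1
        have h1 := hηdom (j-1)
        have h2 := hjmin (j-1) (by omega)
        have h3 : (η.take (j-1)).sum ≠ (l.take (j-1)).sum := by
          intro hcc; exact h2 ⟨by omega, by omega, hcc⟩
        have h4 := hmid (j-1) (by omega) (by omega)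
        omega
    have hηlt : η.getD j 0 < v := by
      have eη := PartAux.sum_take_succ η j
      have el := PartAux.sum_take_succ l j
      have h1 := hηdom (j+1)
      have h2 := hKhi j (by omega)
      omega
    have hjlen : j ≤ η.length := by
      by_contra hcc
      have : η.getD (j-1) 0 = 0 := List.getD_eq_default _ _ (by omega)
      omega
    -- parity computation
    have hηE : (η.take j).countP (fun x => decide (x % 2 = 0)) =
        η.countP (fun x => decide (v ≤ x) && decide (x % 2 = 0)) :=
      countP_even_take hηs hην (by omega) hηlt
    have hηEeven : Even (η.countP (fun x => decide (v ≤ x) && decide (x % 2 = 0))) := by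
      apply even_countP
      intro x hx
      simp only [Bool.and_eq_true, decide_eq_true_eq] at hx
      exact hηP1 x (Nat.even_iff.2 hx.2)
    have hlE : (l.take j).countP (fun x => decide (x % 2 = 0)) =
        l.countP (fun x => decide (v ≤ x) && decide (x % 2 = 0)) := by
      have base : (l.take K).countP (fun x => decide (x % 2 = 0)) =
          l.countP (fun x => decide (v ≤ x) && decide (x % 2 = 0)) :=
        countP_even_take hs (v := v) (j := K) (by omega) (by omega) (hKhi K (le_refl K))
      have hsplit : l.take j = l.take K ++ (l.drop K).take (j - K) := by
        conv_lhs => rw [show j = K + (j - K) by omega]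
        exact List.take_add
      have hmid0 : ((l.drop K).take (j-K)).countP (fun x => decide (x % 2 = 0)) = 0 := by
        rw [List.countP_eq_zero]
        intro x hx
        obtain ⟨i, hij, hilen, hieq⟩ := mem_take_imp hx
        rw [getD_drop] at hieq
        have := hmid (K+i) (by omega) (by omega)
        have hv2' := Nat.even_iff.1 hveven
        simp only [decide_eq_true_eq]
        omega
      rw [hsplit, List.countP_append, base, hmid0]
      omega
    have hlEodd : ¬ Even (l.countP (fun x => decide (v ≤ x) && decide (x % 2 = 0))) :=
      countP_vE_odd hveven hvcount hcounts
    -- lengths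
    have hηtlen : (η.take j).length = j := by rw [List.length_take]; omega
    have hltlen : (l.take j).length = j := by rw [List.length_take]; omega
    -- parity of sums
    have hη2 := PartAux.sum_mod_two (η.take j)
    have hl2 := PartAux.sum_mod_two (l.take j)
    have hηsplit := List.length_eq_countP_add_countP (fun x => decide (x % 2 = 0)) (l := η.take j)
    have hlsplit := List.length_eq_countP_add_countP (fun x => decide (x % 2 = 0)) (l := l.take j)
    have hcongrη : (η.take j).countP (fun a => decide ¬(decide (a % 2 = 0)) = true) =
        (η.take j).countP (fun x => decide (x % 2 = 1)) := by
      apply List.countP_congr; intro x _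
      simp only [decide_eq_true_eq, decide_not, Bool.not_eq_true', decide_eq_false_iff_not]
      omega
    have hcongrl : (l.take j).countP (fun a => decide ¬(decide (a % 2 = 0)) = true) =
        (l.take j).countP (fun x => decide (x % 2 = 1)) := by
      apply List.countP_congr; intro x _
      simp only [decide_eq_true_eq, decide_not, Bool.not_eq_true', decide_eq_false_iff_not]
      omega
    rw [hcongrη, hηtlen] at hηsplit
    rw [hcongrl, hltlen] at hlsplit
    rw [Nat.even_iff] at hηEeven
    rw [Nat.even_iff] at hlEodd
    rw [hηE] at hηsplit
    rw [hlE] at hlsplit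
    omega
  have h3 := hηdom j
  have h4 := key j h h2
  have h5 := hPSb j h h2
  omega

end PartStep

namespace PartMain
open PartAux PartAux2 PartAux3 PartStep List

lemma exists_collapse (N : ℕ) : ∀ l : List ℕ, l.Pairwise (· ≥ ·) → (∀ x ∈ l, 0 < x) →
    (∑ j ∈ Finset.range (l.sum + 1), (l.take j).sum) ≤ N →
    ∃ lp : List ℕ, lp.Pairwise (· ≥ ·) ∧ (∀ x ∈ lp, 0 < x) ∧ lp.sum = l.sum ∧
      (∀ x : ℕ, Even x → Even (lp.count x)) ∧
      (∀ j, (lp.take j).sum ≤ (l.take j).sum) ∧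
      (∀ η : List ℕ, η.Pairwise (· ≥ ·) → (∀ x : ℕ, Even x → Even (η.count x)) →
        (∀ j, (η.take j).sum ≤ (l.take j).sum) →
        ∀ j, (η.take j).sum ≤ (lp.take j).sum) := by
  induction N with
  | zero =>
    intro l hs hpos hm
    by_cases hP1 : ∀ x : ℕ, Even x → Even (l.count x)
    · exact ⟨l, hs, hpos, rfl, hP1, fun j => le_refl _, fun η _ _ hd => hd⟩
    · exfalso
      push_neg at hP1
      obtain ⟨x0, hx0e, hx0c⟩ := hP1
      obtain ⟨l', hs', hpos', hsum', hdom', ⟨j0, hj0len, hj0lt⟩, _⟩ :=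
        step l hs hpos ⟨x0, hx0e, hx0c⟩
      have hlen := length_le_sum l hpos
      have hstrict : (∑ j ∈ Finset.range (l.sum + 1), (l'.take j).sum) <
          (∑ j ∈ Finset.range (l.sum + 1), (l.take j).sum) :=
        Finset.sum_lt_sum (fun i _ => hdom' i)
          ⟨j0, Finset.mem_range.2 (by omega), hj0lt⟩
      omega
  | succ N ih =>
    intro l hs hpos hm
    by_cases hP1 : ∀ x : ℕ, Even x → Even (l.count x)
    · exact ⟨l, hs, hpos, rfl, hP1, fun j => le_refl _, fun η _ _ hd => hd⟩
    · push_neg at hP1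
      obtain ⟨x0, hx0e, hx0c⟩ := hP1
      obtain ⟨l', hs', hpos', hsum', hdom', ⟨j0, hj0len, hj0lt⟩, hmax'⟩ :=
        step l hs hpos ⟨x0, hx0e, hx0c⟩
      have hlen := length_le_sum l hpos
      have hstrict : (∑ j ∈ Finset.range (l.sum + 1), (l'.take j).sum) <
          (∑ j ∈ Finset.range (l.sum + 1), (l.take j).sum) :=
        Finset.sum_lt_sum (fun i _ => hdom' i)
          ⟨j0, Finset.mem_range.2 (by omega), hj0lt⟩
      have hm' : (∑ j ∈ Finset.range (l'.sum + 1), (l'.take j).sum) ≤ N := by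
        rw [hsum']; omega
      obtain ⟨lp, h1, h2, h3, h4, h5, h6⟩ := ih l' hs' hpos' hm'
      refine ⟨lp, h1, h2, h3.trans hsum', h4, fun j => (h5 j).trans (hdom' j), ?_⟩
      intro η hη1 hη2 hη3
      exact h6 η hη1 hη2 (hmax' η hη1 hη2 hη3)

end PartMain

/-- For every partition `λ` of `n` there is a unique `λ⁺ ∈ 𝒫₁(n)` (every even part with
even multiplicity) with `λ⁺ ≤ λ`, maximal among elements of `𝒫₁(n)` below `λ`. -/




theorem stmt_0 (n : ℕ) (lam : List ℕ) (hlam : IsPartition lam n) :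
    ∃! lp : List ℕ, IsPartition lp n ∧ (∀ x : ℕ, Even x → Even (lp.count x)) ∧
      Dominates lam lp ∧
      ∀ eta : List ℕ, IsPartition eta n → (∀ x : ℕ, Even x → Even (eta.count x)) →
        Dominates lam eta → Dominates lp eta := by
  obtain ⟨hs, hpos, hsum⟩ := hlam
  obtain ⟨lp, h1, h2, h3, h4, h5, h6⟩ :=
    PartMain.exists_collapse (∑ j ∈ Finset.range (lam.sum + 1), (lam.take j).sum)
      lam hs hpos (le_refl _)
  refine ⟨lp, ⟨⟨h1, h2, h3.trans hsum⟩, h4, h5, ?_⟩, ?_⟩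
  · intro eta heta hetaP1 hetadom
    exact h6 eta heta.1 hetaP1 hetadom
  · rintro y ⟨⟨hy1, hy2, hy3⟩, hyP1, hydom, hymax⟩
    exact PartAux3.eq_of_dom_dom hy2 h2
      (hymax lp ⟨h1, h2, h3.trans hsum⟩ h4 h5)
      (h6 y hy1 hyP1 hydom)
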